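/- Let Y, Z be reals with 2 ≤ Y < Z, and let n be a positive integer such that p² does not divide n for any prime p with Y ≤ p < Z. Define w(m) = 1/(#{p prime : Y ≤ p < Z, p | m} + 1) for positive integers m. Then Σ_{p prime : Y ≤ p < Z, p | n} w(n/p) equals 1 if n has at least one prime factor p with Y ≤ p < Z, and equals 0 otherwise. -/

import Mathlib

/-- Ramaré's weight function `w(m) = 1/(#{Y ≤ p < Z : p | m} + 1)`, where `p` ranges
over primes. -/
noncomputable def ramareWeight (Y Z : ℝ) (m : ℕ) : ℝ :=
  1 / (((m.primeFactors.filter (fun p : ℕ => Y ≤ (p : ℝ) ∧ (p : ℝ) < Z)).card : ℝ) + 1)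

/-- The Ramaré identity: if `n ≥ 1` is not divisible by `p²` for any prime
`p ∈ [Y, Z)`, then `∑_{Y ≤ p < Z, p | n} w(n/p)` equals `1` if `n` has a prime factor
in `[Y, Z)` and `0` otherwise. -/
theorem ramare_identity (Y Z : ℝ) (hY : 2 ≤ Y) (hYZ : Y < Z) (n : ℕ) (hn : 0 < n)
    (hsf : ∀ p : ℕ, p.Prime → Y ≤ (p : ℝ) → (p : ℝ) < Z → ¬ p ^ 2 ∣ n) :
    ∑ p ∈ n.primeFactors.filter (fun p : ℕ => Y ≤ (p : ℝ) ∧ (p : ℝ) < Z),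
        ramareWeight Y Z (n / p) =
      if ∃ p ∈ n.primeFactors, Y ≤ (p : ℝ) ∧ (p : ℝ) < Z then 1 else 0 := by
  set S := n.primeFactors.filter (fun p : ℕ => Y ≤ (p : ℝ) ∧ (p : ℝ) < Z) with hS
  have key : ∀ p ∈ S, (n / p).primeFactors = n.primeFactors.erase p := by
    intro p hp
    simp only [hS, Finset.mem_filter, Nat.mem_primeFactors] at hp
    obtain ⟨⟨hpp, hpn, hn0⟩, hY', hZ'⟩ := hp
    ext q
    simp only [Nat.mem_primeFactors, Finset.mem_erase]
    constructor
    · rintro ⟨hq, hqd, -⟩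
      have hqp : q ≠ p := by
        rintro rfl
        exact hsf q hq hY' hZ' (by rw [pow_two]; exact (Nat.dvd_div_iff_mul_dvd hpn).mp hqd)
      exact ⟨hqp, hq, hqd.trans (Nat.div_dvd_of_dvd hpn), hn0⟩
    · rintro ⟨hqp, hq, hqd, -⟩
      refine ⟨hq, ?_, ?_⟩
      · rw [Nat.dvd_div_iff_mul_dvd hpn]
        exact Nat.Coprime.mul_dvd_of_dvd_of_dvd
          ((Nat.coprime_primes hpp hq).mpr (Ne.symm hqp)) hpn hqd
      · exact (Nat.div_pos (Nat.le_of_dvd hn hpn) hpp.pos).ne'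
  have hw : ∀ p ∈ S, ramareWeight Y Z (n / p) = 1 / (S.card : ℝ) := by
    intro p hp
    have h1 : 1 ≤ S.card := Finset.card_pos.mpr ⟨p, hp⟩
    rw [ramareWeight, key p hp, Finset.filter_erase, ← hS,
      Finset.card_erase_of_mem hp, Nat.cast_sub h1]
    ring_nf
  rw [Finset.sum_congr rfl hw, Finset.sum_const, nsmul_eq_mul]
  have hiff : (∃ p ∈ n.primeFactors, Y ≤ (p : ℝ) ∧ (p : ℝ) < Z) ↔ S.Nonempty := by
    simp [hS, Finset.filter_nonempty_iff]
  by_cases h : S.Nonempty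
  · rw [if_pos (hiff.mpr h)]
    have : (S.card : ℝ) ≠ 0 := by
      exact_mod_cast (Finset.card_pos.mpr h).ne'
    field_simp
  · rw [if_neg (fun hh => h (hiff.mp hh)), Finset.not_nonempty_iff_eq_empty.mp h]
    simp
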